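/- Let d, q ≥ 1. For every continuous map f : Δ_{d-1}^{(d+1)(q-1)} → ℝ^d there exists ε > 0 such that for every continuous map f̃ : Δ_{d-1}^{(d+1)(q-1)} → ℝ^d with sup_{x ∈ Δ_{d-1}^{(d+1)(q-1)}} ‖f̃(x) − f(x)‖ < ε (Euclidean norm on ℝ^d), every winding partition of f̃ is also a winding partition of f. -/

import Mathlib

open scoped BigOperators

noncomputable section

/-- Euclidean space `ℝ^d`. -/
abbrev Euc (d : ℕ) : Type := EuclideanSpace ℝ (Fin d)

/-- The standard `N`-simplex `Δ^N ⊆ ℝ^{N+1}`. -/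
def stdSimp (N : ℕ) : Set (Fin (N+1) → ℝ) :=
  {x | (∀ i, 0 ≤ x i) ∧ ∑ i, x i = 1}

/-- The face `σ_S` of `Δ^N` spanned by the vertices in `S`. -/
def simpFace {N : ℕ} (S : Finset (Fin (N+1))) : Set (Fin (N+1) → ℝ) :=
  {x ∈ stdSimp N | ∀ i ∉ S, x i = 0}

/-- The `k`-skeleton `Δ_k^N` of the standard `N`-simplex. -/
def skel (N k : ℕ) : Set (Fin (N+1) → ℝ) :=
  {x ∈ stdSimp N | {i | x i ≠ 0}.ncard ≤ k + 1}

/-- A Tverberg partition for (the relevant restriction of) `f`: a set of `q`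
pairwise disjoint nonempty vertex subsets whose faces have images with a common point. -/
def IsTverbergPartition (q : ℕ) {N d : ℕ}
    (f : (Fin (N+1) → ℝ) → Euc d) (P : Finset (Finset (Fin (N+1)))) : Prop :=
  P.card = q ∧ (∀ S ∈ P, S.Nonempty) ∧
  (∀ S ∈ P, ∀ T ∈ P, S ≠ T → Disjoint S T) ∧
  (⋂ S ∈ P, f '' simpFace S).Nonempty

/-- The boundary `∂σ_S` of the face `σ_S`. -/
def simpFaceBoundary {N : ℕ} (S : Finset (Fin (N+1))) : Set (Fin (N+1) → ℝ) :=
  {x ∈ simpFace S | ∃ i ∈ S, x i = 0}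

/-- `p ∈ W_{≠0}(f|_{∂σ_S})`: either `p` is in the image of the boundary, or the
corestriction of `f|_{∂σ_S}` to `ℝ^d \ {p}` is not nullhomotopic (there is no
continuous map agreeing with `f` on `∂σ_S` that is homotopic to a constant). -/
def InWne (d : ℕ) {N : ℕ} (f : (Fin (N+1) → ℝ) → Euc d)
    (S : Finset (Fin (N+1))) (p : Euc d) : Prop :=
  p ∈ f '' simpFaceBoundary S ∨
  ¬ ∃ (g : C(↥(simpFaceBoundary S), ↥({p}ᶜ : Set (Euc d))))
      (y : ↥({p}ᶜ : Set (Euc d))),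
      (∀ x : ↥(simpFaceBoundary S), (g x : Euc d) = f ↑x) ∧
      g.Homotopic (ContinuousMap.const _ y)

/-- A winding partition (in dimension `d`) for `f` defined on the `(d-1)`-skeleton:
`q` pairwise disjoint nonempty vertex subsets, each of size at most `d+1`, together
with a winding point `p`. -/
def IsWindingPartition (d q : ℕ) {N : ℕ}
    (f : (Fin (N+1) → ℝ) → Euc d) (P : Finset (Finset (Fin (N+1)))) : Prop :=
  P.card = q ∧ (∀ S ∈ P, S.Nonempty) ∧ (∀ S ∈ P, S.card ≤ d + 1) ∧
  (∀ S ∈ P, ∀ T ∈ P, S ≠ T → Disjoint S T) ∧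
  ∃ p : Euc d, ∀ S ∈ P,
    (S.card ≤ d → p ∈ f '' simpFace S) ∧
    (S.card = d + 1 → InWne d f S p)

open Metric Set in
lemma isClosed_simpFace {N : ℕ} (S : Finset (Fin (N+1))) : IsClosed (simpFace S) := by
  have h1 : IsClosed {x : Fin (N+1) → ℝ | ∀ i, 0 ≤ x i} := by
    have : {x : Fin (N+1) → ℝ | ∀ i, 0 ≤ x i} = ⋂ i, {x | 0 ≤ x i} := by
      ext x; simp
    rw [this]
    exact isClosed_iInter fun i => isClosed_le continuous_const (continuous_apply i)
  have h2 : IsClosed {x : Fin (N+1) → ℝ | ∑ i, x i = 1} :=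
    isClosed_eq (by continuity) continuous_const
  have h3 : IsClosed {x : Fin (N+1) → ℝ | ∀ i ∉ S, x i = 0} := by
    have : {x : Fin (N+1) → ℝ | ∀ i ∉ S, x i = 0} = ⋂ (i) (_ : i ∉ S), {x | x i = 0} := by
      ext x; simp
    rw [this]
    exact isClosed_iInter fun i => isClosed_iInter fun _ =>
      isClosed_eq (continuous_apply i) continuous_const
  have : simpFace S = ({x : Fin (N+1) → ℝ | ∀ i, 0 ≤ x i} ∩ {x | ∑ i, x i = 1})
      ∩ {x | ∀ i ∉ S, x i = 0} := by
    ext x; simp [simpFace, stdSimp, and_assoc]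
  rw [this]
  exact ((h1.inter h2).inter h3)

open Metric Set in
lemma isCompact_simpFace {N : ℕ} (S : Finset (Fin (N+1))) : IsCompact (simpFace S) := by
  have hsub : simpFace S ⊆ Set.pi Set.univ (fun _ : Fin (N+1) => Set.Icc (0:ℝ) 1) := by
    rintro x ⟨⟨hx0, hx1⟩, -⟩ i -
    refine ⟨hx0 i, ?_⟩
    calc x i ≤ ∑ j, x j := Finset.single_le_sum (fun j _ => hx0 j) (Finset.mem_univ i)
    _ = 1 := hx1
  exact (isCompact_univ_pi fun _ => isCompact_Icc).of_isClosed_subset (isClosed_simpFace S) hsub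

open Metric Set in
lemma skel_eq_biUnion (N k : ℕ) :
    skel N k = ⋃ T ∈ {T : Finset (Fin (N+1)) | T.card ≤ k + 1}, simpFace T := by
  ext x
  simp only [skel, mem_setOf_eq, mem_iUnion, exists_prop]
  constructor
  · rintro ⟨hx, hcard⟩
    refine ⟨Finset.univ.filter (fun i => x i ≠ 0), ?_, hx, ?_⟩
    · have : ((Finset.univ.filter (fun i => x i ≠ 0) : Finset (Fin (N+1))) : Set (Fin (N+1)))
          = {i | x i ≠ 0} := by ext i; simp
      calc (Finset.univ.filter (fun i => x i ≠ 0)).card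
          = ({i | x i ≠ 0} : Set (Fin (N+1))).ncard := by rw [← this, Set.ncard_coe_finset]
        _ ≤ k + 1 := hcard
    · intro i hi
      by_contra h
      exact hi (by simp [h])
  · rintro ⟨T, hT, hx, hT0⟩
    refine ⟨hx, ?_⟩
    have hsub : {i | x i ≠ 0} ⊆ (T : Set (Fin (N+1))) := fun i hi => by
      by_contra h; exact hi (hT0 i h)
    calc ({i | x i ≠ 0} : Set (Fin (N+1))).ncard ≤ (T : Set (Fin (N+1))).ncard :=
        Set.ncard_le_ncard hsub (T.finite_toSet)
      _ = T.card := Set.ncard_coe_finset T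
      _ ≤ k + 1 := hT

open Metric Set in
lemma isCompact_skel (N k : ℕ) : IsCompact (skel N k) := by
  rw [skel_eq_biUnion]
  exact Set.Finite.isCompact_biUnion (Set.toFinite _) (fun T _ => isCompact_simpFace T)

lemma simpFace_subset_skel {N d : ℕ} (hd : 1 ≤ d) {S : Finset (Fin (N+1))}
    (hS : S.card ≤ d) : simpFace S ⊆ skel N (d-1) := by
  rintro x ⟨hx, hS0⟩
  refine ⟨hx, ?_⟩
  have hsub : {i | x i ≠ 0} ⊆ (S : Set (Fin (N+1))) := fun i hi => by
    by_contra h; exact hi (hS0 i h)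
  have : ({i | x i ≠ 0} : Set (Fin (N+1))).ncard ≤ S.card := by
    calc ({i | x i ≠ 0} : Set (Fin (N+1))).ncard ≤ (S : Set (Fin (N+1))).ncard :=
        Set.ncard_le_ncard hsub S.finite_toSet
      _ = S.card := Set.ncard_coe_finset S
  omega

lemma boundary_subset_skel {N d : ℕ} (hd : 1 ≤ d) {S : Finset (Fin (N+1))}
    (hS : S.card ≤ d + 1) : simpFaceBoundary S ⊆ skel N (d-1) := by
  rintro x ⟨⟨hx, hS0⟩, i, hiS, hxi⟩
  refine ⟨hx, ?_⟩
  have hsub : {j | x j ≠ 0} ⊆ ((S.erase i : Finset (Fin (N+1))) : Set (Fin (N+1))) := by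
    intro j hj
    simp only [Finset.coe_erase, Set.mem_diff, Set.mem_singleton_iff]
    constructor
    · by_contra h; exact hj (hS0 j h)
    · rintro rfl; exact hj hxi
  have h1 : ({j | x j ≠ 0} : Set (Fin (N+1))).ncard ≤ (S.erase i).card := by
    calc ({j | x j ≠ 0} : Set (Fin (N+1))).ncard ≤ _ :=
        Set.ncard_le_ncard hsub (S.erase i).finite_toSet
      _ = (S.erase i).card := Set.ncard_coe_finset _
  have h2 : (S.erase i).card = S.card - 1 := Finset.card_erase_of_mem hiS
  omega

lemma boundary_subset_face {N : ℕ} (S : Finset (Fin (N+1))) :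
    simpFaceBoundary S ⊆ simpFace S := fun _ hx => hx.1
lemma isClosed_simpFaceBoundary {N : ℕ} (S : Finset (Fin (N+1))) :
    IsClosed (simpFaceBoundary S) := by
  have : simpFaceBoundary S = simpFace S ∩ ⋃ i ∈ (S : Set (Fin (N+1))), {x | x i = 0} := by
    ext x; simp [simpFaceBoundary]
  rw [this]
  exact (isClosed_simpFace S).inter (Set.Finite.isClosed_biUnion S.finite_toSet
    fun i _ => isClosed_eq (continuous_apply i) continuous_const)
open Metric Set in
lemma segment_homotopic {X : Type} [TopologicalSpace X] {d : ℕ} {p : Euc d}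
    (U V : C(X, ↥({p}ᶜ : Set (Euc d))))
    (h : ∀ (x : X) (t : ℝ), t ∈ Set.Icc (0:ℝ) 1 →
      (1 - t) • (U x : Euc d) + t • (V x : Euc d) ≠ p) :
    U.Homotopic V := by
  refine ⟨⟨⟨fun q =>
      ⟨(1 - (q.1 : ℝ)) • (U q.2 : Euc d) + (q.1 : ℝ) • (V q.2 : Euc d),
        h q.2 q.1 q.1.2⟩, ?_⟩, ?_, ?_⟩⟩
  · apply Continuous.subtype_mk
    fun_prop
  · intro x; ext1; simp
  · intro x; ext1; simp

open Metric Set in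
def transMap {d : ℕ} (p p' : Euc d) : C(↥({p}ᶜ : Set (Euc d)), ↥({p'}ᶜ : Set (Euc d))) :=
  ⟨fun z => ⟨(z : Euc d) + (p' - p), by
    have hz := z.2
    simp only [Set.mem_compl_iff, Set.mem_singleton_iff] at hz ⊢
    intro h
    have := eq_sub_of_add_eq h
    rw [sub_sub_cancel] at this
    exact hz this⟩, by
    apply Continuous.subtype_mk
    fun_prop⟩

@[simp] lemma transMap_apply {d : ℕ} (p p' : Euc d) (z : ↥({p}ᶜ : Set (Euc d))) :
    (transMap p p' z : Euc d) = (z : Euc d) + (p' - p) := rfl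
open Metric Set in
lemma winding_point_bound {d N : ℕ} (hd : 1 ≤ d)
    {f g : (Fin (N+1) → ℝ) → Euc d} {R : ℝ} (hR : 0 ≤ R)
    (hfR : ∀ x ∈ skel N (d-1), ‖f x‖ ≤ R)
    (hgc : ContinuousOn g (skel N (d-1)))
    (hg1 : ∀ x ∈ skel N (d-1), ‖g x - f x‖ < 1)
    {P : Finset (Finset (Fin (N+1)))} (hPne : P.Nonempty)
    (hcard : ∀ S ∈ P, S.card ≤ d + 1)
    {p : Euc d}
    (hp : ∀ S ∈ P, (S.card ≤ d → p ∈ g '' simpFace S) ∧ (S.card = d+1 → InWne d g S p)) :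
    ‖p‖ ≤ R + 2 := by
  obtain ⟨S, hS⟩ := hPne
  have hgb : ∀ x ∈ skel N (d-1), ‖g x‖ ≤ R + 1 := by
    intro x hx
    calc ‖g x‖ = ‖g x - f x + f x‖ := by rw [sub_add_cancel]
      _ ≤ ‖g x - f x‖ + ‖f x‖ := norm_add_le _ _
      _ ≤ 1 + R := by
          have := hg1 x hx; have := hfR x hx; linarith
      _ = R + 1 := by ring
  rcases Nat.lt_or_ge S.card (d+1) with hlt | hge
  · obtain ⟨x, hx, rfl⟩ := (hp S hS).1 (by omega)
    exact le_trans (hgb x (simpFace_subset_skel hd (by omega) hx)) (by linarith)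
  · have hScard : S.card = d + 1 := le_antisymm (hcard S hS) hge
    have hw := (hp S hS).2 hScard
    by_contra hbig
    push_neg at hbig
    have hp0 : ∀ z : Euc d, ‖z‖ ≤ R + 1 → z ≠ p := by
      intro z hz h; rw [h] at hz; linarith
    rcases hw with ⟨x, hx, rfl⟩ | hnull
    · exact absurd (hgb x (boundary_subset_skel hd (hcard S hS) hx)) (by linarith)
    · apply hnull
      have hmem : ∀ x : ↥(simpFaceBoundary S), g (x : Fin (N+1) → ℝ) ∈ ({p}ᶜ : Set (Euc d)) := by
        intro x
        simp only [Set.mem_compl_iff, Set.mem_singleton_iff]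
        exact hp0 _ (hgb _ (boundary_subset_skel hd (hcard S hS) x.2))
      refine ⟨⟨fun x => ⟨g x, hmem x⟩,
        Continuous.subtype_mk ((hgc.mono (boundary_subset_skel hd (hcard S hS))).restrict) _⟩,
        ⟨(0:Euc d), ?_⟩, fun x => rfl, ?_⟩
      · simp only [Set.mem_compl_iff, Set.mem_singleton_iff]
        exact hp0 0 (by simp; linarith)
      · apply segment_homotopic
        intro x t ht
        simp only [ContinuousMap.const_apply, ContinuousMap.coe_mk, smul_zero, add_zero]
        apply hp0
        calc ‖(1 - t) • g (x : Fin (N+1) → ℝ)‖ = |1 - t| * ‖g (x : Fin (N+1) → ℝ)‖ := by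
              rw [norm_smul, Real.norm_eq_abs]
          _ ≤ 1 * (R + 1) := by
              apply mul_le_mul ?_ (hgb _ (boundary_subset_skel hd (hcard S hS) x.2))
                (norm_nonneg _) zero_le_one
              rw [abs_le]; constructor <;> [linarith [ht.2]; linarith [ht.1]]
          _ = R + 1 := one_mul _
open Metric Set in
lemma local_key {d N : ℕ} (hd : 1 ≤ d)
    {f : (Fin (N+1) → ℝ) → Euc d} (hf : ContinuousOn f (skel N (d-1)))
    {S : Finset (Fin (N+1))} {p : Euc d}
    (hbad : (S.card ≤ d ∧ p ∉ f '' simpFace S) ∨ (S.card = d+1 ∧ ¬ InWne d f S p)) :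
    ∃ ε > (0:ℝ), ∃ δ > (0:ℝ), ∀ g : (Fin (N+1) → ℝ) → Euc d,
      ContinuousOn g (skel N (d-1)) → (∀ x ∈ skel N (d-1), ‖g x - f x‖ < ε) →
      ∀ p' : Euc d, dist p' p < δ →
      (S.card ≤ d ∧ p' ∉ g '' simpFace S) ∨ (S.card = d+1 ∧ ¬ InWne d g S p') := by
  rcases hbad with ⟨hcard, hpnot⟩ | ⟨hScard, hnw⟩
  · -- small face case
    have hC : IsCompact (f '' simpFace S) :=
      (isCompact_simpFace S).image_of_continuousOn (hf.mono (simpFace_subset_skel hd hcard))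
    obtain ⟨r, hr0, hrball⟩ := Metric.isOpen_iff.mp hC.isClosed.isOpen_compl p hpnot
    refine ⟨r/2, by linarith, r/2, by linarith, fun g hgc hgnear p' hp' => ?_⟩
    left
    refine ⟨hcard, ?_⟩
    rintro ⟨x, hx, hgx⟩
    have hxK := simpFace_subset_skel hd hcard hx
    have : f x ∈ ball p r := by
      rw [mem_ball]
      calc dist (f x) p ≤ dist (f x) (g x) + dist (g x) p := dist_triangle _ _ _
        _ < r/2 + r/2 := by
            apply add_lt_add
            · rw [dist_eq_norm, norm_sub_rev]; exact hgnear x hxK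
            · rw [hgx]; exact hp'
        _ = r := by ring
    exact hrball this (Set.mem_image_of_mem f hx)
  · -- full face case
    rw [InWne, not_or, not_not] at hnw
    obtain ⟨hpnot, g₀, y, hvals, hhtpy⟩ := hnw
    have hbd : simpFaceBoundary S ⊆ skel N (d-1) := boundary_subset_skel hd (by omega)
    have hC : IsCompact (f '' simpFaceBoundary S) :=
      ((isCompact_simpFace S).of_isClosed_subset (isClosed_simpFaceBoundary S) (boundary_subset_face S)).image_of_continuousOn
        (hf.mono hbd)
    obtain ⟨r, hr0, hrball⟩ := Metric.isOpen_iff.mp hC.isClosed.isOpen_compl p hpnot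
    have hfar : ∀ x ∈ simpFaceBoundary S, r ≤ ‖f x - p‖ := by
      intro x hx
      by_contra h
      push_neg at h
      exact hrball (by rw [mem_ball, dist_eq_norm]; exact h) (Set.mem_image_of_mem f hx)
    refine ⟨r/4, by linarith, r/4, by linarith, fun g hgc hgnear p' hp' => ?_⟩
    right
    refine ⟨hScard, ?_⟩
    rw [InWne, not_or, not_not]
    constructor
    · rintro ⟨x, hx, hgx⟩
      have h1 : r ≤ ‖f x - p‖ := hfar x hx
      have h2 : ‖g x - f x‖ < r/4 := hgnear x (hbd hx)
      have h3 : ‖f x - p‖ ≤ ‖g x - p‖ + ‖g x - f x‖ := by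
        calc ‖f x - p‖ = ‖(g x - p) - (g x - f x)‖ := by congr 1; abel
          _ ≤ _ := norm_sub_le _ _
      have h4 : ‖g x - p‖ < r/4 := by rw [hgx, ← dist_eq_norm]; exact hp'
      linarith
    · have hgne : ∀ x : ↥(simpFaceBoundary S), g (x : Fin (N+1) → ℝ) ∈ ({p'}ᶜ : Set (Euc d)) := by
        intro x
        simp only [Set.mem_compl_iff, Set.mem_singleton_iff]
        intro heq
        have h1 : r ≤ ‖f ↑x - p‖ := hfar _ x.2
        have h2 : ‖g ↑x - f ↑x‖ < r/4 := hgnear _ (hbd x.2)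
        have h3 : ‖f ↑x - p‖ ≤ ‖g ↑x - p‖ + ‖g ↑x - f ↑x‖ := by
          calc ‖f ↑x - p‖ = ‖(g ↑x - p) - (g ↑x - f ↑x)‖ := by congr 1; abel
            _ ≤ _ := norm_sub_le _ _
        have h4 : ‖g ↑x - p‖ < r/4 := by rw [heq, ← dist_eq_norm]; exact hp'
        linarith
      set G : C(↥(simpFaceBoundary S), ↥({p'}ᶜ : Set (Euc d))) :=
        ⟨fun x => ⟨g x, hgne x⟩, Continuous.subtype_mk ((hgc.mono hbd).restrict) _⟩ with hG
      set g₁ : C(↥(simpFaceBoundary S), ↥({p'}ᶜ : Set (Euc d))) :=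
        (transMap p p').comp g₀ with hg₁
      have hg₁x : ∀ x, (g₁ x : Euc d) = f ↑x + (p' - p) := by
        intro x; rw [hg₁]; simp [hvals x]
      have h₁ : g₁.Homotopic (ContinuousMap.const _ (transMap p p' y)) := by
        have := ContinuousMap.Homotopic.comp (ContinuousMap.Homotopic.refl (transMap p p')) hhtpy
        rwa [ContinuousMap.comp_const] at this
      have h₂ : G.Homotopic g₁ := by
        apply segment_homotopic
        intro x t ht heq
        have h1 : r ≤ ‖f ↑x - p‖ := hfar _ x.2
        have h2 : ‖g ↑x - f ↑x‖ < r/4 := hgnear _ (hbd x.2)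
        have hident : (1 - t) • (G x : Euc d) + t • (g₁ x : Euc d) - p'
            = (f ↑x - p) + (1 - t) • ((g ↑x - f ↑x) - (p' - p)) := by
          rw [hg₁x x]
          show (1 - t) • (g ↑x) + t • (f ↑x + (p' - p)) - p' = _
          module
        rw [heq, sub_self] at hident
        have h0 : (f ↑x - p) = - ((1 - t) • ((g ↑x - f ↑x) - (p' - p))) := by
          have := hident.symm
          linear_combination (norm := module) this
        have h5 : ‖f ↑x - p‖ ≤ ‖(g ↑x - f ↑x) - (p' - p)‖ := by
          rw [h0, norm_neg, norm_smul, Real.norm_eq_abs]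
          apply mul_le_of_le_one_left (norm_nonneg _)
          rw [abs_le]; constructor <;> [linarith [ht.2]; linarith [ht.1]]
        have h6 : ‖(g ↑x - f ↑x) - (p' - p)‖ ≤ ‖g ↑x - f ↑x‖ + ‖p' - p‖ := norm_sub_le _ _
        have h7 : ‖p' - p‖ < r/4 := by rw [← dist_eq_norm]; exact hp'
        linarith
      exact ⟨G, transMap p p' y, fun x => rfl, h₂.trans h₁⟩
open Metric Set in
lemma key_lemma {d q N : ℕ} (hd : 1 ≤ d) (hq : 1 ≤ q)
    {f : (Fin (N+1) → ℝ) → Euc d} (hf : ContinuousOn f (skel N (d-1)))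
    {P₀ : Finset (Finset (Fin (N+1)))} (hP₀ : ¬ IsWindingPartition d q f P₀) :
    ∃ ε > (0:ℝ), ∀ g : (Fin (N+1) → ℝ) → Euc d,
      ContinuousOn g (skel N (d-1)) → (∀ x ∈ skel N (d-1), ‖g x - f x‖ < ε) →
      ¬ IsWindingPartition d q g P₀ := by
  by_cases hcomb : P₀.card = q ∧ (∀ S ∈ P₀, S.Nonempty) ∧ (∀ S ∈ P₀, S.card ≤ d + 1) ∧
      (∀ S ∈ P₀, ∀ T ∈ P₀, S ≠ T → Disjoint S T)
  · have hnop : ∀ p : Euc d, ∃ S ∈ P₀,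
        (S.card ≤ d ∧ p ∉ f '' simpFace S) ∨ (S.card = d+1 ∧ ¬ InWne d f S p) := by
      intro p
      by_contra h
      push_neg at h
      apply hP₀
      refine ⟨hcomb.1, hcomb.2.1, hcomb.2.2.1, hcomb.2.2.2, p, ?_⟩
      intro S hS
      have := h S hS
      exact this
    choose S hSP hbad using hnop
    choose ε hε δ hδ hloc using fun p => local_key hd hf (hbad p)
    obtain ⟨R₀, hfR₀⟩ := (isCompact_skel N (d-1)).exists_bound_of_continuousOn hf
    set R := max R₀ 0 with hR
    have hR0 : (0:ℝ) ≤ R := le_max_right _ _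
    have hfR : ∀ x ∈ skel N (d-1), ‖f x‖ ≤ R := fun x hx =>
      le_trans (hfR₀ x hx) (le_max_left _ _)
    have hB : IsCompact (closedBall (0:Euc d) (R+2)) := isCompact_closedBall _ _
    obtain ⟨t, ht⟩ := hB.elim_finite_subcover (fun p => ball p (δ p))
      (fun _ => isOpen_ball) (fun x hx => mem_iUnion.2 ⟨x, mem_ball_self (hδ x)⟩)
    have htne : t.Nonempty := by
      by_contra h
      rw [Finset.not_nonempty_iff_eq_empty] at h
      have h0 : (0:Euc d) ∈ closedBall (0:Euc d) (R+2) := mem_closedBall_self (by linarith)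
      rw [h] at ht
      simpa using ht h0
    refine ⟨min 1 (t.inf' htne ε),
      lt_min zero_lt_one ((Finset.lt_inf'_iff _).mpr fun p _ => hε p), ?_⟩
    intro g hgc hgnear hWP
    obtain ⟨hc1, hc2, hc3, hc4, p', hp'⟩ := hWP
    have hg1 : ∀ x ∈ skel N (d-1), ‖g x - f x‖ < 1 := fun x hx =>
      lt_of_lt_of_le (hgnear x hx) (min_le_left _ _)
    have hPne : P₀.Nonempty := Finset.card_pos.mp (by omega)
    have hpB : p' ∈ closedBall (0:Euc d) (R+2) := by
      rw [mem_closedBall, dist_zero_right]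
      exact winding_point_bound hd hR0 hfR hgc hg1 hPne hc3 hp'
    obtain ⟨p₀, hp₀t, hp₀⟩ := mem_iUnion₂.mp (ht hpB)
    have hεle : min 1 (t.inf' htne ε) ≤ ε p₀ :=
      le_trans (min_le_right _ _) (Finset.inf'_le _ hp₀t)
    have hres := hloc p₀ g hgc (fun x hx => lt_of_lt_of_le (hgnear x hx) hεle) p'
      (mem_ball.mp hp₀)
    have hgood := hp' (S p₀) (hSP p₀)
    rcases hres with ⟨h1, h2⟩ | ⟨h1, h2⟩
    · exact h2 (hgood.1 h1)
    · exact h2 (hgood.2 h1)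
  · exact ⟨1, one_pos, fun g _ _ hWP =>
      hcomb ⟨hWP.1, hWP.2.1, hWP.2.2.1, hWP.2.2.2.1⟩⟩
/-- Approximation lemma: small perturbations of a map on the `(d-1)`-skeleton
create no new winding partitions. -/
theorem winding_partition_stable (d q : ℕ) (hd : 1 ≤ d) (hq : 1 ≤ q)
    (f : (Fin ((d+1)*(q-1)+1) → ℝ) → Euc d)
    (hf : ContinuousOn f (skel ((d+1)*(q-1)) (d-1))) :
    ∃ ε > (0:ℝ), ∀ g : (Fin ((d+1)*(q-1)+1) → ℝ) → Euc d,
      ContinuousOn g (skel ((d+1)*(q-1)) (d-1)) →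
      (∀ x ∈ skel ((d+1)*(q-1)) (d-1), ‖g x - f x‖ < ε) →
      ∀ P : Finset (Finset (Fin ((d+1)*(q-1)+1))),
        IsWindingPartition d q g P → IsWindingPartition d q f P := by
  classical
  have hkey : ∀ P₀ : Finset (Finset (Fin ((d+1)*(q-1)+1))),
      ∃ ε > (0:ℝ), ∀ g : (Fin ((d+1)*(q-1)+1) → ℝ) → Euc d,
        ContinuousOn g (skel ((d+1)*(q-1)) (d-1)) →
        (∀ x ∈ skel ((d+1)*(q-1)) (d-1), ‖g x - f x‖ < ε) →
        IsWindingPartition d q g P₀ → IsWindingPartition d q f P₀ := by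
    intro P₀
    by_cases h : IsWindingPartition d q f P₀
    · exact ⟨1, one_pos, fun _ _ _ _ => h⟩
    · obtain ⟨ε, hε, hspec⟩ := key_lemma hd hq hf h
      exact ⟨ε, hε, fun g hgc hgn hWP => absurd hWP (hspec g hgc hgn)⟩
  choose ε hε hspec using hkey
  refine ⟨Finset.univ.inf' Finset.univ_nonempty ε,
    (Finset.lt_inf'_iff _).mpr fun P₀ _ => hε P₀, ?_⟩
  intro g hgc hgn P hWP
  exact hspec P g hgc
    (fun x hx => lt_of_lt_of_le (hgn x hx) (Finset.inf'_le _ (Finset.mem_univ P))) hWP
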